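/- For fixed logits g : Fin K → ℝ and any index k, the temperature-scaled softmax satisfies lim_{T→∞} T * (f_k(x;T) - 1/K) = (1/K²) * ∑_{j≠k} (g_k(x) - g_j(x)). In particular, f_k(x;T) → 1/K as T → ∞, and the first-order correction in 1/T is (1/K²)∑_{j≠k}(g_k - g_j). -/

import Mathlib

open Real Finset Filter

lemma aux_lim1 (a b : ℝ) :
    Tendsto (fun T : ℝ => T * (Real.exp (a / T) - Real.exp (b / T))) atTop (nhds (a - b)) := by
  have hd : HasDerivAt (fun t : ℝ => Real.exp (a * t) - Real.exp (b * t)) (a - b) 0 := by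
    have h1 := (((hasDerivAt_id (0:ℝ)).const_mul a).exp)
    have h2 := (((hasDerivAt_id (0:ℝ)).const_mul b).exp)
    exact (h1.sub h2).congr_deriv (by simp)
  have hslope := hasDerivAt_iff_tendsto_slope.mp hd
  have hinv : Tendsto (fun T : ℝ => T⁻¹) atTop (nhdsWithin 0 {x : ℝ | x ≠ 0}) := by
    refine tendsto_inv_atTop_nhdsGT_zero.mono_right (nhdsWithin_mono 0 ?_)
    intro x hx
    exact ne_of_gt hx
  have hc := hslope.comp hinv
  refine hc.congr' ?_
  filter_upwards [eventually_gt_atTop (0 : ℝ)] with T hT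
  have hT' : T ≠ 0 := ne_of_gt hT
  simp only [Function.comp, slope, vsub_eq_sub, sub_zero]
  rw [div_eq_mul_inv a T, div_eq_mul_inv b T]
  field_simp
  simp

lemma aux_limS (K : ℕ) (g : Fin K → ℝ) :
    Tendsto (fun T : ℝ => ∑ j, Real.exp (g j / T)) atTop (nhds (K : ℝ)) := by
  have : Tendsto (fun T : ℝ => ∑ j, Real.exp (g j / T)) atTop (nhds (∑ _j : Fin K, (1 : ℝ))) := by
    refine tendsto_finset_sum _ fun j _ => ?_
    simpa [Function.comp_def] using (Real.continuous_exp.tendsto 0).comp (tendsto_const_nhds.div_atTop tendsto_id)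
  simpa using this

theorem tempScaledSoftmax_firstOrder
    (K : ℕ) (hK : 0 < K) (g : Fin K → ℝ) (k : Fin K) :
    Filter.Tendsto
      (fun T : ℝ =>
        T * (Real.exp (g k / T) / (∑ j, Real.exp (g j / T)) - 1 / K))
      Filter.atTop
      (nhds ((1 / (K : ℝ) ^ 2) * ∑ j ∈ Finset.univ.erase k, (g k - g j))) ∧
    Filter.Tendsto
      (fun T : ℝ => Real.exp (g k / T) / ∑ j, Real.exp (g j / T))
      Filter.atTop (nhds (1 / K)) := by
  have hKR : (0 : ℝ) < K := by exact_mod_cast hK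
  have hS := aux_limS K g
  have hSpos : ∀ T : ℝ, 0 < ∑ j, Real.exp (g j / T) := by
    intro T
    exact Finset.sum_pos (fun j _ => Real.exp_pos _) ⟨k, Finset.mem_univ k⟩
  have h2 : Tendsto (fun T : ℝ => Real.exp (g k / T) / ∑ j, Real.exp (g j / T))
      atTop (nhds (1 / K)) := by
    have hnum : Tendsto (fun T : ℝ => Real.exp (g k / T)) atTop (nhds 1) := by
      simpa [Function.comp_def] using (Real.continuous_exp.tendsto 0).comp (tendsto_const_nhds.div_atTop tendsto_id)
    exact hnum.div hS (ne_of_gt hKR)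
  refine ⟨?_, h2⟩
  have hN : Tendsto (fun T : ℝ => ∑ j, T * (Real.exp (g k / T) - Real.exp (g j / T)))
      atTop (nhds (∑ j, (g k - g j))) :=
    tendsto_finset_sum _ fun j _ => aux_lim1 (g k) (g j)
  have hD : Tendsto (fun T : ℝ => (K : ℝ) * ∑ j, Real.exp (g j / T)) atTop
      (nhds ((K : ℝ) * K)) := tendsto_const_nhds.mul hS
  have hdiv := hN.div hD (by positivity)
  have hval : (∑ j, (g k - g j)) / ((K : ℝ) * K)
      = (1 / (K : ℝ) ^ 2) * ∑ j ∈ Finset.univ.erase k, (g k - g j) := by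
    rw [← Finset.sum_erase_add Finset.univ _ (Finset.mem_univ k), sub_self, add_zero]
    ring
  rw [hval] at hdiv
  refine hdiv.congr fun T => ?_
  have hS0 : (∑ j, Real.exp (g j / T)) ≠ 0 := ne_of_gt (hSpos T)
  have hsum : ∑ j, T * (Real.exp (g k / T) - Real.exp (g j / T))
      = T * ((K : ℝ) * Real.exp (g k / T) - ∑ j, Real.exp (g j / T)) := by
    rw [← Finset.mul_sum, Finset.sum_sub_distrib, Finset.sum_const]
    simp [nsmul_eq_mul]
  simp only [Pi.div_apply]
  rw [hsum]
  field_simp
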